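/- For any edge (u,v) of a locally finite graph, the Ollivier–Ricci curvature satisfies the lower bound Ric_O(u,v) ≥ -2(1 - 1/deg(u) - 1/deg(v))₊, where x₊ = max(x, 0). -/

import Mathlib

/-- The uniform probability measure on a finite set, as a function. -/
noncomputable def uniformOn {V : Type*} [DecidableEq V] (s : Finset V) : V → ℝ :=
  fun x => if x ∈ s then (s.card : ℝ)⁻¹ else 0

/-- The Wasserstein-1 distance between finitely supported measures `μ`, `ν` on the
vertices of a graph `G`, with the graph distance as transport cost. -/
noncomputable def W1 {V : Type*} (G : SimpleGraph V) (μ ν : V → ℝ) : ℝ :=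
  sInf {c : ℝ | ∃ π : V → V → ℝ,
    (∀ x y, 0 ≤ π x y) ∧
    (∀ x, ∑ᶠ y, π x y = μ x) ∧
    (∀ y, ∑ᶠ x, π x y = ν y) ∧
    c = ∑ᶠ x, ∑ᶠ y, π x y * (G.dist x y)}

private lemma W1_le_of {V : Type*} (G : SimpleGraph V) (μ ν : V → ℝ) (π : V → V → ℝ)
    (h0 : ∀ x y, 0 ≤ π x y) (h1 : ∀ x, ∑ᶠ y, π x y = μ x)
    (h2 : ∀ y, ∑ᶠ x, π x y = ν y) :
    W1 G μ ν ≤ ∑ᶠ x, ∑ᶠ y, π x y * (G.dist x y) := by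
  apply csInf_le
  · refine ⟨0, ?_⟩
    rintro c ⟨π', h0', -, -, rfl⟩
    exact finsum_nonneg fun x => finsum_nonneg fun y =>
      mul_nonneg (h0' x y) (by positivity)
  · exact ⟨π, h0, h1, h2, rfl⟩

private lemma sum_if_eq {V : Type*} [DecidableEq V] (s : Finset V) (w : V) (hw : w ∈ s)
    (f : V → ℝ) (cw crest : ℝ) (hfw : f w = cw) (hrest : ∀ y ∈ s, y ≠ w → f y = crest) :
    ∑ y ∈ s, f y = cw + ((s.card : ℝ) - 1) * crest := by
  rw [← Finset.add_sum_erase s f hw, hfw]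
  congr 1
  rw [Finset.sum_congr rfl (fun y hy => hrest y (Finset.mem_of_mem_erase hy)
    (Finset.ne_of_mem_erase hy)), Finset.sum_const, nsmul_eq_mul,
    Finset.card_erase_of_mem hw]
  have h1 : 1 ≤ s.card := Finset.card_pos.mpr ⟨w, hw⟩
  rw [Nat.cast_sub h1, Nat.cast_one]



private lemma aux1 (a b : ℝ) (hb : b ≠ 0) :
    (1/a + 1/b - 1) + (b - 1) * (1/b) = 1/a := by
  rw [mul_one_div, sub_div, div_self hb]; ring

private lemma aux2 (a b : ℝ) (ha : a ≠ 0) :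
    (1/a + 1/b - 1) + (a - 1) * (1/a) = 1/b := by
  rw [mul_one_div, sub_div, div_self ha]; ring

private lemma aux3 (a b : ℝ) (ha : a ≠ 0) (hb : b - 1 ≠ 0) :
    0 + (b - 1) * (1/(a*(b-1))) = 1/a := by
  rw [zero_add, mul_one_div, div_eq_div_iff (mul_ne_zero ha hb) ha]; ring

private lemma aux4 (a b : ℝ) (ha : a ≠ 0) (hb : b ≠ 0) (ha1 : a - 1 ≠ 0) :
    (a-1) * (1/a - 1/(b*(a-1))) = 1 - 1/a - 1/b := by
  have h1 : (a-1) * (1/a) = 1 - 1/a := by rw [mul_one_div, sub_div, div_self ha]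
  have h2 : (a-1) * (1/(b*(a-1))) = 1/b := by
    rw [mul_one_div, div_eq_div_iff (mul_ne_zero hb ha1) hb]; ring
  rw [mul_sub, h1, h2]

set_option maxHeartbeats 1000000 in
private theorem W1_bound {V : Type*} [DecidableEq V]
    (G : SimpleGraph V) [∀ v, Fintype (G.neighborSet v)]
    (u v : V) (h : G.Adj u v) :
    W1 G (uniformOn (G.neighborFinset u)) (uniformOn (G.neighborFinset v)) ≤
      1 + 2 * max (1 - 1 / ((G.neighborFinset u).card : ℝ)
        - 1 / ((G.neighborFinset v).card : ℝ)) 0 := by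
  classical
  set A := G.neighborFinset u with hA
  set B := G.neighborFinset v with hB
  have hmemA : ∀ x, x ∈ A ↔ G.Adj u x := by intro x; rw [hA, SimpleGraph.mem_neighborFinset]
  have hmemB : ∀ y, y ∈ B ↔ G.Adj v y := by intro y; rw [hB, SimpleGraph.mem_neighborFinset]
  have hvA : v ∈ A := (hmemA v).mpr h
  have huB : u ∈ B := (hmemB u).mpr h.symm
  set a : ℝ := (A.card : ℝ) with ha
  set b : ℝ := (B.card : ℝ) with hb
  have ha0 : 0 < a := by
    rw [ha]; exact_mod_cast Finset.card_pos.mpr ⟨v, hvA⟩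
  have hb0 : 0 < b := by
    rw [hb]; exact_mod_cast Finset.card_pos.mpr ⟨u, huB⟩
  have hdxu : ∀ x ∈ A, (G.dist x u : ℝ) = 1 := by
    intro x hx
    have hh : G.dist x u = 1 := SimpleGraph.dist_eq_one_iff_adj.mpr ((hmemA x).mp hx).symm
    rw [hh]; norm_num
  have hdvy : ∀ y ∈ B, (G.dist v y : ℝ) = 1 := by
    intro y hy
    have hh : G.dist v y = 1 := SimpleGraph.dist_eq_one_iff_adj.mpr ((hmemB y).mp hy)
    rw [hh]; norm_num
  have hd3 : ∀ x ∈ A, ∀ y ∈ B, (G.dist x y : ℝ) ≤ 3 := by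
    intro x hx y hy
    have hxu : G.Adj x u := ((hmemA x).mp hx).symm
    have hvy : G.Adj v y := (hmemB y).mp hy
    have hw := SimpleGraph.dist_le (SimpleGraph.Walk.cons hxu
      (SimpleGraph.Walk.cons h (SimpleGraph.Walk.cons hvy SimpleGraph.Walk.nil)))
    simp only [SimpleGraph.Walk.length_cons, SimpleGraph.Walk.length_nil] at hw
    exact_mod_cast hw
  have hUA : ∀ x ∈ A, uniformOn A x = 1/a := by
    intro x hx; rw [one_div, ha]; simp [uniformOn, hx]
  have hUA' : ∀ x, x ∉ A → uniformOn A x = 0 := by intro x hx; simp [uniformOn, hx]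
  have hUB : ∀ y ∈ B, uniformOn B y = 1/b := by
    intro y hy; rw [one_div, hb]; simp [uniformOn, hy]
  have hUB' : ∀ y, y ∉ B → uniformOn B y = 0 := by intro y hy; simp [uniformOn, hy]
  rcases le_or_gt 1 (1/a + 1/b) with hc2 | hc1
  · -- Case 2: 1/a + 1/b ≥ 1, coupling with cost 1
    set π : V → V → ℝ := fun x y => if x ∈ A ∧ y ∈ B then
      (if x = v then (if y = u then 1/a + 1/b - 1 else 1/b)
       else (if y = u then 1/a else 0)) else 0 with hπ
    have hπ0 : ∀ x y, ¬(x ∈ A ∧ y ∈ B) → π x y = 0 := by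
      intro x y hxy; simp only [hπ]; rw [if_neg hxy]
    have hπvu : π v u = 1/a + 1/b - 1 := by simp [hπ, hvA, huB]
    have hπvy : ∀ y ∈ B, y ≠ u → π v y = 1/b := by
      intro y hy hyu; simp [hπ, hvA, hy, hyu]
    have hπxu : ∀ x ∈ A, x ≠ v → π x u = 1/a := by
      intro x hx hxv; simp [hπ, hx, huB, hxv]
    have hπxy : ∀ x ∈ A, x ≠ v → ∀ y ∈ B, y ≠ u → π x y = 0 := by
      intro x hx hxv y hy hyu; simp [hπ, hx, hy, hxv, hyu]
    have hsuppR : ∀ x, Function.support (fun y => π x y) ⊆ ↑B := by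
      intro x y hy
      by_contra hyB
      exact hy (hπ0 x y (by tauto))
    have hsuppC : ∀ y, Function.support (fun x => π x y) ⊆ ↑A := by
      intro y x hx
      by_contra hxA
      exact hx (hπ0 x y (by tauto))
    have hnn : ∀ x y, 0 ≤ π x y := by
      intro x y
      by_cases hxy : x ∈ A ∧ y ∈ B
      · by_cases hxv : x = v
        · subst hxv
          by_cases hyu : y = u
          · subst hyu; rw [hπvu]; linarith
          · rw [hπvy y hxy.2 hyu]; exact (one_div_pos.mpr hb0).le
        · by_cases hyu : y = u
          · subst hyu; rw [hπxu x hxy.1 hxv]; exact (one_div_pos.mpr ha0).le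
          · rw [hπxy x hxy.1 hxv y hxy.2 hyu]
      · rw [hπ0 x y hxy]
    have hrow : ∀ x, ∑ᶠ y, π x y = uniformOn A x := by
      intro x
      rw [finsum_eq_sum_of_support_subset _ (hsuppR x)]
      by_cases hx : x ∈ A
      · rw [hUA x hx]
        by_cases hxv : x = v
        · subst hxv
          rw [sum_if_eq B u huB _ (1/a + 1/b - 1) (1/b) hπvu (fun y hy hyu => hπvy y hy hyu),
            ← hb]
          exact aux1 a b hb0.ne'
        · rw [sum_if_eq B u huB _ (1/a) 0 (hπxu x hx hxv)
            (fun y hy hyu => hπxy x hx hxv y hy hyu)]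
          ring
      · rw [hUA' x hx, Finset.sum_eq_zero]
        intro y _
        exact hπ0 x y (by tauto)
    have hcol : ∀ y, ∑ᶠ x, π x y = uniformOn B y := by
      intro y
      rw [finsum_eq_sum_of_support_subset _ (hsuppC y)]
      by_cases hy : y ∈ B
      · rw [hUB y hy]
        by_cases hyu : y = u
        · subst hyu
          rw [sum_if_eq A v hvA _ (1/a + 1/b - 1) (1/a) hπvu
            (fun x hx hxv => hπxu x hx hxv), ← ha]
          exact aux2 a b ha0.ne'
        · rw [sum_if_eq A v hvA _ (1/b) 0 (hπvy y hy hyu)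
            (fun x hx hxv => hπxy x hx hxv y hy hyu)]
          ring
      · rw [hUB' y hy, Finset.sum_eq_zero]
        intro x _
        exact hπ0 x y (by tauto)
    have hterm : ∀ x y, π x y * (G.dist x y : ℝ) = π x y := by
      intro x y
      by_cases hxy : x ∈ A ∧ y ∈ B
      · by_cases hxv : x = v
        · subst hxv; rw [hdvy y hxy.2, mul_one]
        · by_cases hyu : y = u
          · subst hyu; rw [hdxu x hxy.1, mul_one]
          · rw [hπxy x hxy.1 hxv y hxy.2 hyu, zero_mul]
      · rw [hπ0 x y hxy, zero_mul]
    have hcost : ∑ᶠ x, ∑ᶠ y, π x y * (G.dist x y : ℝ) = 1 := by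
      simp only [hterm]
      simp only [hrow]
      rw [finsum_eq_sum_of_support_subset (uniformOn A) (s := A)
        (fun x hx => by by_contra hxA; exact hx (hUA' x hxA))]
      rw [Finset.sum_congr rfl (fun x hx => hUA x hx), Finset.sum_const, nsmul_eq_mul, ← ha]
      rw [one_div, mul_inv_cancel₀ ha0.ne']
    have hW := W1_le_of G (uniformOn A) (uniformOn B) π hnn hrow hcol
    rw [hcost] at hW
    have hm : 0 ≤ max (1 - 1/a - 1/b) 0 := le_max_right _ _
    linarith
  · -- Case 1: 1/a + 1/b < 1
    have ht : 0 < 1 - 1/a - 1/b := by linarith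
    set t : ℝ := 1 - 1/a - 1/b with htdef
    have hb1 : 1 < b := by
      have h1b : 1/b < 1 := by
        have hp : 0 < 1/a := by positivity
        linarith
      rwa [div_lt_one hb0] at h1b
    have ha1 : 1 < a := by
      have h1a : 1/a < 1 := by
        have hp : 0 < 1/b := by positivity
        linarith
      rwa [div_lt_one ha0] at h1a
    set r : ℝ := 1/a - 1/(b*(a-1)) with hrdef
    set c : ℝ := 1/b - 1/(a*(b-1)) with hcdef
    set q : ℝ := r * c / t with hqdef
    have har : (a-1) * r = t := by
      rw [hrdef, htdef]; exact aux4 a b ha0.ne' hb0.ne' (by linarith)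
    have hbc : (b-1) * c = t := by
      rw [hcdef, htdef]
      have := aux4 b a hb0.ne' ha0.ne' (by linarith)
      rw [this]; ring
    have hr0 : 0 < r := by nlinarith
    have hc0 : 0 < c := by nlinarith
    have hq0 : 0 < q := by rw [hqdef]; positivity
    have hbq : (b-1) * q = r := by
      rw [hqdef, show (b-1) * (r * c / t) = r * ((b-1)*c) / t by ring, hbc,
        mul_div_cancel_right₀ r ht.ne']
    have haq : (a-1) * q = c := by
      rw [hqdef, show (a-1) * (r * c / t) = c * ((a-1)*r) / t by ring, har,
        mul_div_cancel_right₀ c ht.ne']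
    set π : V → V → ℝ := fun x y => if x ∈ A ∧ y ∈ B then
      (if x = v then (if y = u then 0 else 1/(a*(b-1)))
       else (if y = u then 1/(b*(a-1)) else q)) else 0 with hπ
    have hπ0 : ∀ x y, ¬(x ∈ A ∧ y ∈ B) → π x y = 0 := by
      intro x y hxy; simp only [hπ]; rw [if_neg hxy]
    have hπvu : π v u = 0 := by simp [hπ, hvA, huB]
    have hπvy : ∀ y ∈ B, y ≠ u → π v y = 1/(a*(b-1)) := by
      intro y hy hyu; simp [hπ, hvA, hy, hyu]
    have hπxu : ∀ x ∈ A, x ≠ v → π x u = 1/(b*(a-1)) := by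
      intro x hx hxv; simp [hπ, hx, huB, hxv]
    have hπxy : ∀ x ∈ A, x ≠ v → ∀ y ∈ B, y ≠ u → π x y = q := by
      intro x hx hxv y hy hyu; simp [hπ, hx, hy, hxv, hyu]
    have hsuppR : ∀ x, Function.support (fun y => π x y) ⊆ ↑B := by
      intro x y hy
      by_contra hyB
      exact hy (hπ0 x y (by tauto))
    have hsuppC : ∀ y, Function.support (fun x => π x y) ⊆ ↑A := by
      intro y x hx
      by_contra hxA
      exact hx (hπ0 x y (by tauto))
    have hab1 : (0:ℝ) < a * (b-1) := by nlinarith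
    have hba1 : (0:ℝ) < b * (a-1) := by nlinarith
    have hnn : ∀ x y, 0 ≤ π x y := by
      intro x y
      by_cases hxy : x ∈ A ∧ y ∈ B
      · by_cases hxv : x = v
        · subst hxv
          by_cases hyu : y = u
          · subst hyu; rw [hπvu]
          · rw [hπvy y hxy.2 hyu]; exact (one_div_pos.mpr hab1).le
        · by_cases hyu : y = u
          · subst hyu; rw [hπxu x hxy.1 hxv]; exact (one_div_pos.mpr hba1).le
          · rw [hπxy x hxy.1 hxv y hxy.2 hyu]; exact hq0.le
      · rw [hπ0 x y hxy]
    have hrow : ∀ x, ∑ᶠ y, π x y = uniformOn A x := by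
      intro x
      rw [finsum_eq_sum_of_support_subset _ (hsuppR x)]
      by_cases hx : x ∈ A
      · rw [hUA x hx]
        by_cases hxv : x = v
        · subst hxv
          rw [sum_if_eq B u huB _ 0 (1/(a*(b-1))) hπvu (fun y hy hyu => hπvy y hy hyu), ← hb]
          exact aux3 a b ha0.ne' (by linarith)
        · rw [sum_if_eq B u huB _ (1/(b*(a-1))) q (hπxu x hx hxv)
            (fun y hy hyu => hπxy x hx hxv y hy hyu), ← hb, hbq, hrdef]
          ring
      · rw [hUA' x hx, Finset.sum_eq_zero]
        intro y _
        exact hπ0 x y (by tauto)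
    have hcol : ∀ y, ∑ᶠ x, π x y = uniformOn B y := by
      intro y
      rw [finsum_eq_sum_of_support_subset _ (hsuppC y)]
      by_cases hy : y ∈ B
      · rw [hUB y hy]
        by_cases hyu : y = u
        · subst hyu
          rw [sum_if_eq A v hvA _ 0 (1/(b*(a-1))) hπvu (fun x hx hxv => hπxu x hx hxv), ← ha]
          exact aux3 b a hb0.ne' (by linarith)
        · rw [sum_if_eq A v hvA _ (1/(a*(b-1))) q (hπvy y hy hyu)
            (fun x hx hxv => hπxy x hx hxv y hy hyu), ← ha, haq, hcdef]
          ring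
      · rw [hUB' y hy, Finset.sum_eq_zero]
        intro x _
        exact hπ0 x y (by tauto)
    have hsuppCost : Function.support (fun x => ∑ᶠ y, π x y * (G.dist x y : ℝ)) ⊆ ↑A := by
      intro x hx
      by_contra hxA
      apply hx
      simp only
      have hz : (fun y => π x y * (G.dist x y : ℝ)) = fun _ => 0 := by
        funext y
        rw [hπ0 x y (by tauto), zero_mul]
      rw [hz, finsum_zero]
    have hinner : ∀ x, ∑ᶠ y, π x y * (G.dist x y : ℝ)
        = ∑ y ∈ B, π x y * (G.dist x y : ℝ) := by
      intro x
      apply finsum_eq_sum_of_support_subset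
      intro y hy
      by_contra hyB
      apply hy
      simp only
      rw [hπ0 x y (by tauto), zero_mul]
    have hcost : ∑ᶠ x, ∑ᶠ y, π x y * (G.dist x y : ℝ) ≤ 1 + 2 * t := by
      rw [finsum_eq_sum_of_support_subset _ hsuppCost]
      have hv_inner : ∑ᶠ y, π v y * (G.dist v y : ℝ) = 1/a := by
        rw [hinner v]
        rw [Finset.sum_congr rfl (fun y hy => by rw [hdvy y hy, mul_one]),
          sum_if_eq B u huB _ 0 (1/(a*(b-1))) hπvu (fun y hy hyu => hπvy y hy hyu), ← hb]
        exact aux3 a b ha0.ne' (by linarith)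
      have hx_inner : ∀ x ∈ A, x ≠ v →
          ∑ᶠ y, π x y * (G.dist x y : ℝ) ≤ 1/(b*(a-1)) + (b-1) * (3*q) := by
        intro x hx hxv
        rw [hinner x]
        calc ∑ y ∈ B, π x y * (G.dist x y : ℝ)
            ≤ ∑ y ∈ B, (if y = u then 1/(b*(a-1)) else 3*q) := by
              apply Finset.sum_le_sum
              intro y hy
              by_cases hyu : y = u
              · subst hyu
                rw [if_pos rfl, hdxu x hx, mul_one, hπxu x hx hxv]
              · rw [if_neg hyu, hπxy x hx hxv y hy hyu]
                calc q * (G.dist x y : ℝ) ≤ q * 3 :=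
                      mul_le_mul_of_nonneg_left (hd3 x hx y hy) hq0.le
                  _ = 3 * q := by ring
          _ = 1/(b*(a-1)) + (b-1) * (3*q) := by
              rw [sum_if_eq B u huB _ (1/(b*(a-1))) (3*q) (if_pos rfl)
                (fun y _ hyu => if_neg hyu), ← hb]
      calc ∑ x ∈ A, ∑ᶠ y, π x y * (G.dist x y : ℝ)
          ≤ ∑ x ∈ A, (if x = v then 1/a else 1/(b*(a-1)) + (b-1) * (3*q)) := by
            apply Finset.sum_le_sum
            intro x hx
            by_cases hxv : x = v
            · subst hxv; rw [if_pos rfl, hv_inner]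
            · rw [if_neg hxv]; exact hx_inner x hx hxv
        _ = 1/a + (a - 1) * (1/(b*(a-1)) + (b-1) * (3*q)) := by
            rw [sum_if_eq A v hvA _ (1/a) (1/(b*(a-1)) + (b-1) * (3*q)) (if_pos rfl)
              (fun x _ hxv => if_neg hxv), ← ha]
        _ ≤ 1 + 2 * t := by
            have key : (a-1) * ((b-1) * (3*q)) = 3 * t := by
              rw [show (a-1) * ((b-1) * (3*q)) = 3 * ((a-1) * ((b-1)*q)) by ring, hbq, har]
            have h2 : (a-1) * (1/(b*(a-1))) = 1/b := by
              rw [show (a-1) * (1/(b*(a-1))) = (a-1)/(b*(a-1)) by ring]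
              rw [div_eq_div_iff hba1.ne' hb0.ne']
              ring
            have hdist : (a-1) * (1/(b*(a-1)) + (b-1) * (3*q)) = 1/b + 3*t := by
              rw [mul_add, h2, key]
            rw [hdist]
            rw [htdef]
            ring_nf
            linarith [ht]
    have hW := W1_le_of G (uniformOn A) (uniformOn B) π hnn hrow hcol
    have hmax : max (1 - 1/a - 1/b) 0 = t := max_eq_left ht.le
    rw [hmax]
    linarith


/-- The Ollivier–Ricci curvature of a pair of vertices:
`Ric_O(u,v) = 1 - W₁(m_u, m_v)` where `m_x` is uniform on the neighbors of `x`. -/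
noncomputable def ricO {V : Type*} [DecidableEq V] (G : SimpleGraph V)
    [∀ v, Fintype (G.neighborSet v)] (u v : V) : ℝ :=
  1 - W1 G (uniformOn (G.neighborFinset u)) (uniformOn (G.neighborFinset v))

/-- Jost–Liu lower bound: for any edge `(u,v)` of a locally finite graph,
`Ric_O(u,v) ≥ -2(1 - 1/deg(u) - 1/deg(v))₊`. -/
theorem ricO_jost_liu_lower {V : Type*} [DecidableEq V]
    (G : SimpleGraph V) [∀ v, Fintype (G.neighborSet v)]
    (u v : V) (h : G.Adj u v) :
    -2 * max (1 - 1 / (G.degree u : ℝ) - 1 / (G.degree v : ℝ)) 0 ≤ ricO G u v := by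
  have hW := W1_bound G u v h
  have hdu : (G.degree u : ℝ) = ((G.neighborFinset u).card : ℝ) := by
    rw [SimpleGraph.card_neighborFinset_eq_degree]
  have hdv : (G.degree v : ℝ) = ((G.neighborFinset v).card : ℝ) := by
    rw [SimpleGraph.card_neighborFinset_eq_degree]
  have hric : ricO G u v
      = 1 - W1 G (uniformOn (G.neighborFinset u)) (uniformOn (G.neighborFinset v)) := rfl
  rw [hric, hdu, hdv]
  linarith
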